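/- arXiv:2412.15155 — 5 statements merged into one kernel-verified Lean document; each statement's English description precedes it below -/
import Mathlib

section
/- Let 0 < k < n, identify ℝⁿ = ℝᵏ × ℝ^{n−k}, let U ⊆ ℝᵏ be open and φ : U → ℝ^{n−k} be differentiable at x ∈ U, and set p = (x, φ(x)). Define α : U → ℝ^{n−k} by φ(z) = φ(x) + Dφ(x)(z − x) + |z − x| α(z) for z ≠ x and α(x) = 0. Then for every r > 0, every z ∈ U, and every unit vector ν ∈ ℝⁿ orthogonal to the span of the vectors ē_i = (e_i, ∂φ/∂xⁱ(x)), i = 1,…,k, one has |p + rν − (z, φ(z))|² ≥ r²(1 − |α(z)|²). -/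
open Metric Set Filter
open scoped RealInnerProductSpace

noncomputable section

/-- `ℝᵏ` as a Euclidean space. -/
abbrev Ek (k : ℕ) : Type := EuclideanSpace ℝ (Fin k)

/-- `ℝⁿ` identified with `ℝᵏ × ℝ^{n-k}`, with the Euclidean (L²) norm. -/
abbrev Pk (k m : ℕ) : Type := WithLp 2 (Ek k × Ek m)

/-- The identification of the plain product with the L²-product. -/
def emb (k m : ℕ) : Ek k × Ek m → Pk k m := (WithLp.equiv 2 (Ek k × Ek m)).symm

lemma emb_add (k m : ℕ) (a b : Ek k × Ek m) :
    emb k m (a + b) = emb k m a + emb k m b := rfl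

lemma emb_sub (k m : ℕ) (a b : Ek k × Ek m) :
    emb k m (a - b) = emb k m a - emb k m b := rfl

lemma emb_smul (k m : ℕ) (c : ℝ) (a : Ek k × Ek m) :
    emb k m (c • a) = c • emb k m a := rfl

lemma emb_norm_sq (k m : ℕ) (a : Ek k × Ek m) :
    ‖emb k m a‖ ^ 2 = ‖a.1‖ ^ 2 + ‖a.2‖ ^ 2 := by
  rw [WithLp.prod_norm_sq_eq_of_L2]; rfl

/-- The map `a ↦ emb (a, f a)` is linear. -/
def embGraph (k m : ℕ) (f : Ek k →L[ℝ] Ek m) : Ek k →ₗ[ℝ] Pk k m where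
  toFun a := emb k m (a, f a)
  map_add' a b := by rw [← emb_add]; simp only [map_add]; rfl
  map_smul' c a := by rw [RingHom.id_apply, ← emb_smul]; simp only [map_smul]; rfl

set_option maxHeartbeats 1000000 in
/-- if `φ : U → ℝ^{n-k}` is differentiable at `x ∈ U`, `p = (x, φ x)`,
`α` is the first-order remainder of `φ` at `x`, and `T` is the tangent space to the graph
of `φ` at `p` (the span of the vectors `ē_i = (e_i, ∂φ/∂xⁱ(x))`), then for every `r > 0`,
every `z ∈ U` and every unit vector `ν` orthogonal to `T` one has
`|p + rν − (z, φ z)|² ≥ r² (1 − |α z|²)`. -/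
theorem statement0
    (k n : ℕ) (hk : 0 < k) (hkn : k < n)
    (U : Set (Ek k)) (hU : IsOpen U)
    (φ : Ek k → Ek (n - k))
    (x : Ek k) (hx : x ∈ U)
    (hφ : DifferentiableAt ℝ φ x)
    (α : Ek k → Ek (n - k))
    (hα0 : α x = 0)
    (hα : ∀ z ∈ U, φ z = φ x + fderiv ℝ φ x (z - x) + ‖z - x‖ • α z)
    (p : Pk k (n - k)) (hp : p = emb k (n - k) (x, φ x))
    (T : Submodule ℝ (Pk k (n - k)))
    (hT : T = Submodule.span ℝ (Set.range fun i : Fin k =>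
      emb k (n - k) (EuclideanSpace.single i 1, fderiv ℝ φ x (EuclideanSpace.single i 1)))) :
    ∀ r : ℝ, 0 < r → ∀ z ∈ U, ∀ ν : Pk k (n - k), ‖ν‖ = 1 → ν ∈ Tᗮ →
      r ^ 2 * (1 - ‖α z‖ ^ 2) ≤ ‖p + r • ν - emb k (n - k) (z, φ z)‖ ^ 2 := by
  intro r hr z hz ν hν hνT
  set L := embGraph k (n - k) (fderiv ℝ φ x) with hL
  set t : Pk k (n - k) := L (z - x) with ht
  set s : Pk k (n - k) := emb k (n - k) (0, ‖z - x‖ • α z) with hs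
  set q : Pk k (n - k) := emb k (n - k) (z - x, φ z - φ x) with hq
  have htdef : t = emb k (n - k) (z - x, fderiv ℝ φ x (z - x)) := rfl
  -- rewrite the difference
  have hdiff : p + r • ν - emb k (n - k) (z, φ z) = r • ν - q := by
    rw [hp, hq]
    have h1 : ((z, φ z) : Ek k × Ek (n - k)) - (x, φ x) = (z - x, φ z - φ x) := rfl
    rw [← h1, emb_sub]
    abel
  rw [hdiff]
  -- q = t + s
  have hqts : q = t + s := by
    have hφz := hα z hz
    have h2 : ((z - x, φ z - φ x) : Ek k × Ek (n - k)) =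
        (z - x, fderiv ℝ φ x (z - x)) + ((0 : Ek k), ‖z - x‖ • α z) := by
      rw [Prod.ext_iff]
      refine ⟨by simp, ?_⟩
      simp only [Prod.snd_add]
      rw [hφz]; abel
    rw [hq, h2, emb_add, ← htdef, ← hs]
  -- t ∈ T
  have htT : t ∈ T := by
    have hrepr : z - x = ∑ i : Fin k,
        ((z - x) i) • (EuclideanSpace.single i 1 : Ek k) := by
      have := (EuclideanSpace.basisFun (Fin k) ℝ).sum_repr (z - x)
      simpa [EuclideanSpace.basisFun_apply, EuclideanSpace.basisFun_repr] using this.symm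
    have hsum : t = ∑ i : Fin k, ((z - x) i) •
        (emb k (n - k) (EuclideanSpace.single i 1,
          fderiv ℝ φ x (EuclideanSpace.single i 1))) := by
      rw [ht]
      conv_lhs => rw [hrepr]
      rw [map_sum]
      refine Finset.sum_congr rfl fun i _ => ?_
      rw [map_smul]
      rfl
    rw [hsum, hT]
    exact Submodule.sum_mem _ fun i _ =>
      Submodule.smul_mem _ _ (Submodule.subset_span (Set.mem_range_self i))
  -- inner products
  have hνt : ⟪t, ν⟫ = 0 := hνT t htT
  have hsnorm : ‖s‖ = ‖z - x‖ * ‖α z‖ := by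
    have h1 : ‖s‖ ^ 2 = (‖z - x‖ * ‖α z‖) ^ 2 := by
      rw [hs, emb_norm_sq]
      simp [norm_smul]
    have h2 := congrArg Real.sqrt h1
    rwa [Real.sqrt_sq (norm_nonneg _), Real.sqrt_sq (by positivity)] at h2
  have hqν : ⟪q, ν⟫ ≤ ‖z - x‖ * ‖α z‖ := by
    rw [hqts, inner_add_left, hνt, zero_add]
    calc ⟪s, ν⟫ ≤ ‖s‖ * ‖ν‖ := real_inner_le_norm s ν
    _ = ‖z - x‖ * ‖α z‖ := by rw [hν, hsnorm, mul_one]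
  have hzq : ‖z - x‖ ≤ ‖q‖ := by
    have h1 : ‖q‖ ^ 2 = ‖z - x‖ ^ 2 + ‖φ z - φ x‖ ^ 2 := by
      rw [hq, emb_norm_sq]
    have h2 : ‖z - x‖ ^ 2 ≤ ‖q‖ ^ 2 := by
      rw [h1]; nlinarith [sq_nonneg ‖φ z - φ x‖]
    have h3 := Real.sqrt_le_sqrt h2
    rwa [Real.sqrt_sq (norm_nonneg _), Real.sqrt_sq (norm_nonneg _)] at h3
  -- expand the square
  have hexp : ‖r • ν - q‖ ^ 2 = r ^ 2 - 2 * r * ⟪q, ν⟫ + ‖q‖ ^ 2 := by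
    rw [@norm_sub_sq_real, norm_smul, hν, real_inner_smul_left, real_inner_comm]
    simp [abs_of_pos hr]
    ring
  rw [hexp]
  have hα_nn : (0:ℝ) ≤ ‖α z‖ := norm_nonneg _
  nlinarith [sq_nonneg (‖q‖ - r * ‖α z‖), norm_nonneg q,
    mul_le_mul_of_nonneg_right hzq hα_nn]
end
end

section
/- Let 0 < k < n, identify ℝⁿ = ℝᵏ × ℝ^{n−k}, let U ⊆ ℝᵏ be open, φ : U → ℝ^{n−k} be continuous and differentiable at x ∈ U, Γ = {(z, φ(z)) : z ∈ U} its graph, and p = (x, φ(x)). Then for every ε > 0 there exists δ > 0 such that dist(p + rν, Γ)² ≥ r²(1 − ε²) for all 0 < r < δ and all unit normals ν to Γ at p. -/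
open Metric Set Filter
open scoped RealInnerProductSpace

noncomputable section

set_option maxHeartbeats 4000000 in
/-- with `φ : U → ℝ^{n-k}` continuous on the open set `U` and differentiable at
`x ∈ U`, `Γ` the graph of `φ` over `U`, `p = (x, φ x)`, and `T` the tangent space of `Γ` at `p`
(the span of the vectors `ē_i = (e_i, ∂φ/∂xⁱ(x))`): for every `ε > 0` there is `δ > 0` such
that `dist(p + rν, Γ)² ≥ r²(1 − ε²)` for all `0 < r < δ` and all unit normals `ν` to `Γ`
at `p`. -/
theorem statement1
    (k n : ℕ) (hk : 0 < k) (hkn : k < n)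
    (U : Set (Ek k)) (hU : IsOpen U)
    (φ : Ek k → Ek (n - k)) (hφc : ContinuousOn φ U)
    (x : Ek k) (hx : x ∈ U)
    (hφ : DifferentiableAt ℝ φ x)
    (Γ : Set (Pk k (n - k))) (hΓ : Γ = (fun z => emb k (n - k) (z, φ z)) '' U)
    (p : Pk k (n - k)) (hp : p = emb k (n - k) (x, φ x))
    (T : Submodule ℝ (Pk k (n - k)))
    (hT : T = Submodule.span ℝ (Set.range fun i : Fin k =>
      emb k (n - k) (EuclideanSpace.single i 1, fderiv ℝ φ x (EuclideanSpace.single i 1)))) :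
    ∀ ε : ℝ, 0 < ε → ∃ δ : ℝ, 0 < δ ∧ ∀ r : ℝ, 0 < r → r < δ →
      ∀ ν : Pk k (n - k), ‖ν‖ = 1 → ν ∈ Tᗮ →
        r ^ 2 * (1 - ε ^ 2) ≤ (Metric.infDist (p + r • ν) Γ) ^ 2 := by
  intro ε hε
  -- replace ε by ε₀ = min ε (1/2)
  set ε₀ : ℝ := min ε (1/2) with hε₀def
  have hε₀pos : 0 < ε₀ := lt_min hε (by norm_num)
  have hε₀le : ε₀ ≤ ε := min_le_left _ _
  have hε₀lt1 : ε₀ < 1 := lt_of_le_of_lt (min_le_right _ _) (by norm_num)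
  -- the linear map v ↦ (v, Dφ v)
  set D := fderiv ℝ φ x with hD
  set L : Ek k →ₗ[ℝ] Pk k (n - k) :=
    (WithLp.linearEquiv 2 ℝ (Ek k × Ek (n - k))).symm.toLinearMap ∘ₗ
      LinearMap.prod LinearMap.id D.toLinearMap with hL
  have hLapp : ∀ v : Ek k, L v = emb k (n - k) (v, D v) := fun v => rfl
  -- every L v lies in T
  have hTrange : ∀ v : Ek k, L v ∈ T := by
    intro v
    have hsp : Submodule.span ℝ
        (Set.range fun i : Fin k => EuclideanSpace.single (𝕜 := ℝ) i (1:ℝ)) = ⊤ := by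
      have := (EuclideanSpace.basisFun (Fin k) ℝ).toBasis.span_eq
      rw [← this]
      congr 1
      ext w
      simp [EuclideanSpace.basisFun_apply]
    have hvmem : v ∈ Submodule.span ℝ
        (Set.range fun i : Fin k => EuclideanSpace.single (𝕜 := ℝ) i (1:ℝ)) := by
      rw [hsp]; trivial
    have hmem := Submodule.mem_map_of_mem (f := L) hvmem
    rw [Submodule.map_span] at hmem
    have himg : L '' (Set.range fun i : Fin k => EuclideanSpace.single (𝕜 := ℝ) i (1:ℝ)) =
        Set.range fun i : Fin k =>
          emb k (n - k) (EuclideanSpace.single i 1, D (EuclideanSpace.single i 1)) := by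
      rw [← Set.range_comp]
      rfl
    rw [himg] at hmem
    rw [hT]
    exact hmem
  -- differentiability estimate
  have hlo := (hφ.hasFDerivAt).isLittleO
  have hev : ∀ᶠ z in nhds x, ‖φ z - φ x - D (z - x)‖ ≤ ε₀ * ‖z - x‖ := by
    have h := hlo.def hε₀pos
    filter_upwards [h] with z hz using hz
  obtain ⟨δ₁, hδ₁pos, hball⟩ := Metric.eventually_nhds_iff.1 hev
  refine ⟨δ₁ / 2, by linarith, ?_⟩
  intro r hr hrδ ν hν hνT
  -- Γ is nonempty
  have hΓne : Γ.Nonempty := by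
    rw [hΓ]; exact ⟨_, Set.mem_image_of_mem _ hx⟩
  set b : ℝ := r * Real.sqrt (1 - ε₀ ^ 2) with hb
  have h1ε₀ : (0:ℝ) ≤ 1 - ε₀ ^ 2 := by nlinarith
  have hbnn : 0 ≤ b := mul_nonneg hr.le (Real.sqrt_nonneg _)
  have hbsq : b ^ 2 = r ^ 2 * (1 - ε₀ ^ 2) := by
    rw [hb, mul_pow, Real.sq_sqrt h1ε₀]
  have hble : b ≤ r := by
    have h1 : Real.sqrt (1 - ε₀ ^ 2) ≤ 1 :=
      Real.sqrt_le_one.mpr (by nlinarith)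
    calc b ≤ r * 1 := mul_le_mul_of_nonneg_left h1 hr.le
      _ = r := mul_one r
  -- pointwise bound: every point of Γ is at distance ≥ b from p + rν
  have hpt : ∀ q ∈ Γ, b ≤ dist (p + r • ν) q := by
    rw [hΓ]
    rintro q ⟨z, hz, rfl⟩
    set w : Pk k (n - k) := emb k (n - k) (z, φ z) - p with hw
    have hwfst : w.fst = z - x := by rw [hw, hp]; rfl
    have hwsnd : w.snd = φ z - φ x := by rw [hw, hp]; rfl
    have hdist : dist (p + r • ν) (emb k (n - k) (z, φ z)) = ‖r • ν - w‖ := by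
      rw [dist_eq_norm, hw]
      congr 1
      abel
    have hLzero : ⟪L (z - x), ν⟫ = 0 :=
      (Submodule.mem_orthogonal T ν).1 hνT _ (hTrange (z - x))
    have hinner : ⟪w, ν⟫ = ⟪φ z - φ x - D (z - x), ν.snd⟫ := by
      have h1 : ⟪w, ν⟫ = ⟪w.fst, ν.fst⟫ + ⟪w.snd, ν.snd⟫ := WithLp.prod_inner_apply w ν
      have h2 : ⟪z - x, ν.fst⟫ + ⟪D (z - x), ν.snd⟫ = 0 := by
        rw [← hLzero, hLapp]
        rfl
      rw [h1, hwfst, hwsnd, inner_sub_left (𝕜 := ℝ) (φ z - φ x) (D (z - x)) ν.snd]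
      linarith [h2]
    have hνsnd : ‖ν.snd‖ ≤ 1 := by
      have h := WithLp.prod_norm_sq_eq_of_L2 ν
      rw [hν] at h
      nlinarith [norm_nonneg ν.fst, norm_nonneg ν.snd]
    have hwfstle : ‖z - x‖ ≤ ‖w‖ := by
      have h := WithLp.prod_norm_sq_eq_of_L2 w
      rw [hwfst] at h
      nlinarith [norm_nonneg w, norm_nonneg (z - x), norm_nonneg w.snd]
    rw [hdist]
    have hrν : ‖r • ν‖ = r := by
      rw [norm_smul, hν]; simp [abs_of_pos hr]
    by_cases hcase : dist z x < δ₁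
    · -- near case
      have hest := hball hcase
      have hinnabs : |⟪w, ν⟫| ≤ ε₀ * ‖z - x‖ := by
        rw [hinner]
        calc |⟪φ z - φ x - D (z - x), ν.snd⟫| ≤ ‖φ z - φ x - D (z - x)‖ * ‖ν.snd‖ :=
              abs_real_inner_le_norm _ _
          _ ≤ (ε₀ * ‖z - x‖) * 1 := by
              apply mul_le_mul hest hνsnd (norm_nonneg _)
              positivity
          _ = ε₀ * ‖z - x‖ := mul_one _
      have hsq : ‖r • ν - w‖ ^ 2 ≥ r ^ 2 * (1 - ε₀ ^ 2) := by
        have hns := norm_sub_sq_real (r • ν) w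
        have h1 : ‖r • ν‖ ^ 2 = r ^ 2 := by rw [hrν]
        have h2 : ⟪r • ν, w⟫ = r * ⟪w, ν⟫ := by
          rw [real_inner_smul_left, real_inner_comm]
        have h3 : |⟪w, ν⟫| ≤ ε₀ * ‖w‖ :=
          hinnabs.trans (mul_le_mul_of_nonneg_left hwfstle hε₀pos.le)
        rw [hns, h1, h2]
        have habs := abs_le.1 h3
        nlinarith [sq_nonneg (‖w‖ - r * ε₀)]
      have h4 : b ^ 2 ≤ ‖r • ν - w‖ ^ 2 := by rw [hbsq]; linarith
      calc b = Real.sqrt (b ^ 2) := (Real.sqrt_sq hbnn).symm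
        _ ≤ Real.sqrt (‖r • ν - w‖ ^ 2) := Real.sqrt_le_sqrt h4
        _ = ‖r • ν - w‖ := Real.sqrt_sq (norm_nonneg _)
    · -- far case
      push_neg at hcase
      have hwge : δ₁ ≤ ‖w‖ := by
        rw [dist_eq_norm] at hcase
        linarith [hwfstle]
      have h5 : ‖w‖ - ‖r • ν‖ ≤ ‖r • ν - w‖ := by
        calc ‖w‖ - ‖r • ν‖ ≤ ‖w - r • ν‖ := norm_sub_norm_le _ _
          _ = ‖r • ν - w‖ := norm_sub_rev _ _
      rw [hrν] at h5
      linarith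
  -- conclude via infDist
  have hinf : b ≤ Metric.infDist (p + r • ν) Γ := by
    by_contra hcon
    push_neg at hcon
    obtain ⟨q, hq, hdq⟩ := (Metric.infDist_lt_iff hΓne).1 hcon
    exact absurd (hpt q hq) (not_le.2 hdq)
  have hsq : b ^ 2 ≤ (Metric.infDist (p + r • ν) Γ) ^ 2 := pow_le_pow_left₀ hbnn hinf 2
  calc r ^ 2 * (1 - ε ^ 2) ≤ r ^ 2 * (1 - ε₀ ^ 2) := by
        apply mul_le_mul_of_nonneg_left _ (sq_nonneg r)
        nlinarith
    _ = b ^ 2 := hbsq.symm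
    _ ≤ _ := hsq
end
end

section
/- Let 0 < k < n, identify ℝⁿ = ℝᵏ × ℝ^{n−k}, let U ⊆ ℝᵏ be open, φ : U → ℝ^{n−k} be continuous and differentiable at x ∈ U, Γ = {(z, φ(z)) : z ∈ U} its graph, and p = (x, φ(x)). Then δ(p, r)/r → 1 as r → 0+, where δ(p, r) = inf_ν dist(p + rν, Γ) and the infimum is taken over all unit normals ν to Γ at p. -/
open Metric Set Filter
open scoped RealInnerProductSpace

noncomputable section

/-- `δ(p, r) = inf_ν dist(p + rν, Γ)`, the infimum being over all unit vectors `ν`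
orthogonal to the tangent space `T` of `Γ` at `p`. -/
def deltaFn (k m : ℕ) (Γ : Set (Pk k m)) (T : Submodule ℝ (Pk k m)) (p : Pk k m) (r : ℝ) : ℝ :=
  sInf {d : ℝ | ∃ ν : Pk k m, ‖ν‖ = 1 ∧ ν ∈ Tᗮ ∧ d = Metric.infDist (p + r • ν) Γ}

-- key real inequality
lemma key_sqrt (ε r s t : ℝ) (hε : 0 ≤ ε) (hε1 : ε ≤ 1) (hr : 0 ≤ r) (ht : 0 ≤ t) (hts : t ≤ s) :
    Real.sqrt (1 - ε^2) * r ≤ Real.sqrt (r^2 + s^2) - ε * t := by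
  have hs : 0 ≤ s := ht.trans hts
  have ha : (0:ℝ) ≤ 1 - ε^2 := by nlinarith
  have ha2 : Real.sqrt (1 - ε^2) ^ 2 = 1 - ε^2 := Real.sq_sqrt ha
  have ha0 : 0 ≤ Real.sqrt (1 - ε^2) := Real.sqrt_nonneg _
  have h1 : Real.sqrt (1 - ε^2) * r + ε * s ≤ Real.sqrt (r^2 + s^2) := by
    rw [show (Real.sqrt (1 - ε^2) * r + ε * s) = Real.sqrt ((Real.sqrt (1 - ε^2) * r + ε * s)^2) from
      (Real.sqrt_sq (by positivity)).symm]
    apply Real.sqrt_le_sqrt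
    nlinarith [two_mul_le_add_sq (ε*r) (Real.sqrt (1-ε^2)*s)]
  nlinarith


set_option maxHeartbeats 2000000 in
/-- with `φ : U → ℝ^{n-k}` continuous on the open set `U` and differentiable at
`x ∈ U`, `Γ` the graph of `φ` over `U`, `p = (x, φ x)`, and `T` the tangent space of `Γ` at
`p` (the span of the vectors `ē_i = (e_i, ∂φ/∂xⁱ(x))`): `δ(p, r)/r → 1` as `r → 0+`. -/
theorem statement2
    (k n : ℕ) (hk : 0 < k) (hkn : k < n)
    (U : Set (Ek k)) (hU : IsOpen U)
    (φ : Ek k → Ek (n - k)) (hφc : ContinuousOn φ U)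
    (x : Ek k) (hx : x ∈ U)
    (hφ : DifferentiableAt ℝ φ x)
    (Γ : Set (Pk k (n - k))) (hΓ : Γ = (fun z => emb k (n - k) (z, φ z)) '' U)
    (p : Pk k (n - k)) (hp : p = emb k (n - k) (x, φ x))
    (T : Submodule ℝ (Pk k (n - k)))
    (hT : T = Submodule.span ℝ (Set.range fun i : Fin k =>
      emb k (n - k) (EuclideanSpace.single i 1, fderiv ℝ φ x (EuclideanSpace.single i 1)))) :
    Filter.Tendsto (fun r : ℝ => deltaFn k (n - k) Γ T p r / r)
      (nhdsWithin 0 (Set.Ioi 0)) (nhds 1) := by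
  have hmpos : 0 < n - k := by omega
  haveI : FiniteDimensional ℝ (Pk k (n-k)) :=
    (WithLp.linearEquiv 2 ℝ (Ek k × Ek (n-k))).symm.finiteDimensional
  have hpΓ : p ∈ Γ := by rw [hΓ, hp]; exact ⟨x, hx, rfl⟩
  have hΓne : Γ.Nonempty := ⟨p, hpΓ⟩
  set f : Ek k →L[ℝ] Ek (n-k) := fderiv ℝ φ x with hfdef
  let G : Ek k →ₗ[ℝ] Pk k (n-k) :=
    (WithLp.linearEquiv 2 ℝ (Ek k × Ek (n-k))).symm.toLinearMap ∘ₗ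
      (LinearMap.id.prod f.toLinearMap)
  have hGemb : ∀ y : Ek k, G y = emb k (n-k) (y, f y) := fun y => rfl
  -- tangent space membership
  have hvT : ∀ y : Ek k, G y ∈ T := by
    intro y
    have h1 : y ∈ Submodule.span ℝ (Set.range ((EuclideanSpace.basisFun (Fin k) ℝ).toBasis)) := by
      rw [Module.Basis.span_eq]; trivial
    have h2 := Submodule.apply_mem_span_image_of_mem_span G h1
    rw [← Set.range_comp] at h2
    rw [hT]
    convert h2 using 3
    funext i
    rw [Function.comp_apply, OrthonormalBasis.coe_toBasis, EuclideanSpace.basisFun_apply, hGemb]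
  -- T is not everything
  have hTne : Tᗮ ≠ ⊥ := by
    rw [Ne, Submodule.orthogonal_eq_bot_iff]
    intro htop
    rw [hT] at htop
    have h1 : Module.finrank ℝ (Pk k (n-k)) ≤ Fintype.card (Fin k) :=
      finrank_le_of_span_eq_top htop
    have h2 : Module.finrank ℝ (Pk k (n-k)) = k + (n-k) :=
      ((WithLp.linearEquiv 2 ℝ (Ek k × Ek (n-k))).finrank_eq).trans (by
        rw [Module.finrank_prod, finrank_euclideanSpace_fin, finrank_euclideanSpace_fin])
    rw [h2, Fintype.card_fin] at h1
    omega
  obtain ⟨v0, hv0T, hv0ne⟩ := Submodule.exists_mem_ne_zero_of_ne_bot hTne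
  set ν0 : Pk k (n-k) := (‖v0‖⁻¹ : ℝ) • v0 with hν0def
  have hν0 : ‖ν0‖ = 1 := norm_smul_inv_norm hv0ne
  have hν0T : ν0 ∈ Tᗮ := Tᗮ.smul_mem _ hv0T
  -- helper: fst norm bounds
  have hfst : ∀ (a : Ek k) (b : Ek (n-k)), ‖a‖ ≤ ‖emb k (n-k) (a, b)‖ := by
    intro a b
    have h := WithLp.prod_norm_sq_eq_of_L2 (emb k (n-k) (a,b))
    have h1 : (emb k (n-k) (a,b)).fst = a := rfl
    have h2 : (emb k (n-k) (a,b)).snd = b := rfl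
    rw [h1, h2] at h
    nlinarith [norm_nonneg (emb k (n-k) (a,b)), norm_nonneg a, norm_nonneg b]
  rw [Metric.tendsto_nhds]
  intro ε0 hε0
  set ε := min ε0 1 / 2 with hεdef
  have hε : 0 < ε := by
    have := lt_min hε0 one_pos; positivity
  have hε1 : ε ≤ 1/2 := by
    have := min_le_right ε0 1; rw [hεdef]; linarith
  have hεlt : ε < ε0 := by
    have h := min_le_left ε0 1; rw [hεdef]; linarith
  -- little-o property of the derivative
  have hlo := hφ.hasFDerivAt.isLittleO.def hε
  rw [Metric.eventually_nhds_iff] at hlo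
  obtain ⟨δ, hδ, hδlo⟩ := hlo
  -- the main eventual estimate
  filter_upwards [Ioo_mem_nhdsGT_of_mem
    (left_mem_Ico.2 (by positivity : (0:ℝ) < δ/2))] with r hrmem
  obtain ⟨hr0, hrδ⟩ := hrmem
  -- lower bound on distances to points of Γ, uniform over unit normals
  have hLB : ∀ ν : Pk k (n-k), ‖ν‖ = 1 → ν ∈ Tᗮ → ∀ q ∈ Γ,
      Real.sqrt (1-ε^2) * r ≤ dist (p + r • ν) q := by
    intro ν hν hνT q hq
    rw [hΓ] at hq
    obtain ⟨z, hz, rfl⟩ := hq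
    have hsq1 : Real.sqrt (1-ε^2) ≤ 1 := by
      have h := Real.sqrt_le_sqrt (show 1-ε^2 ≤ 1 by nlinarith)
      simpa using h
    by_cases hcase : dist z x < δ
    · -- near case
      have hrem : ‖φ z - φ x - f (z-x)‖ ≤ ε * ‖z - x‖ := by
        simpa using hδlo hcase
      set v : Pk k (n-k) := G (z - x) with hvdef
      set w : Pk k (n-k) := emb k (n-k) (0, φ z - φ x - f (z-x)) with hwdef
      have hsplit : emb k (n-k) (z, φ z) - p = v + w := by
        rw [hp, hvdef, hGemb, hwdef]
        show (WithLp.equiv 2 _).symm _ - (WithLp.equiv 2 _).symm _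
          = (WithLp.equiv 2 _).symm _ + (WithLp.equiv 2 _).symm _
        rw [WithLp.equiv_symm_apply, ← WithLp.toLp_sub, ← WithLp.toLp_add]
        congr 1
        rw [Prod.mk_sub_mk, Prod.mk_add_mk]
        refine Prod.ext ?_ ?_ <;> simp <;> abel
      have hinner : ⟪r • ν, v⟫ = 0 := by
        rw [real_inner_smul_left, real_inner_comm,
          Submodule.inner_right_of_mem_orthogonal (hvT (z-x)) hνT, mul_zero]
      have hpyth : ‖r • ν - v‖ = Real.sqrt (r^2 + ‖v‖^2) := by
        have h2 : ‖r • ν - v‖^2 = r^2 + ‖v‖^2 := by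
          rw [norm_sub_sq_real, hinner, norm_smul, hν, Real.norm_eq_abs,
            abs_of_pos hr0]
          ring
        rw [← h2, Real.sqrt_sq (norm_nonneg _)]
      have hwnorm : ‖w‖ = ‖φ z - φ x - f (z-x)‖ := by
        rw [hwdef]
        exact WithLp.norm_toLp_snd 2 (Ek k) (Ek (n-k)) _
      have hzv : ‖z - x‖ ≤ ‖v‖ := by rw [hvdef, hGemb]; exact hfst _ _
      have hdistq : dist (p + r • ν) (emb k (n-k) (z, φ z)) = ‖(r • ν - v) - w‖ := by
        rw [dist_eq_norm]
        congr 1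
        have hq : emb k (n-k) (z, φ z) = p + (v + w) := by rw [← hsplit]; abel
        rw [hq]; abel
      rw [hdistq]
      calc Real.sqrt (1-ε^2) * r
          ≤ Real.sqrt (r^2 + ‖v‖^2) - ε * ‖z - x‖ :=
            key_sqrt ε r ‖v‖ ‖z-x‖ hε.le (by linarith) hr0.le (norm_nonneg _) hzv
        _ ≤ ‖r • ν - v‖ - ‖w‖ := by
            rw [hpyth]
            have : ‖w‖ ≤ ε * ‖z - x‖ := hwnorm ▸ hrem
            linarith
        _ ≤ ‖(r • ν - v) - w‖ := norm_sub_norm_le _ _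
    · -- far case
      push_neg at hcase
      have h1 : ‖z - x‖ ≤ ‖emb k (n-k) (z, φ z) - p‖ := by
        rw [hp]
        show _ ≤ ‖(WithLp.equiv 2 _).symm _ - (WithLp.equiv 2 _).symm _‖
        rw [WithLp.equiv_symm_apply, ← WithLp.toLp_sub]
        exact hfst _ _
      have h2 : ‖emb k (n-k) (z, φ z) - p‖ - r ≤ dist (p + r • ν) (emb k (n-k) (z, φ z)) := by
        rw [dist_eq_norm]
        have h3 : ‖emb k (n-k) (z, φ z) - p‖
            ≤ ‖p + r • ν - emb k (n-k) (z, φ z)‖ + ‖r • ν‖ := by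
          calc ‖emb k (n-k) (z, φ z) - p‖ = ‖(p + r • ν - emb k (n-k) (z, φ z)) - r • ν‖ := by
                rw [show (p + r • ν - emb k (n-k) (z, φ z)) - r • ν
                  = -(emb k (n-k) (z, φ z) - p) by abel, norm_neg]
            _ ≤ _ := norm_sub_le _ _
        have h4 : ‖r • ν‖ = r := by
          rw [norm_smul, hν, Real.norm_eq_abs, abs_of_pos hr0, mul_one]
        linarith
      have h5 : δ ≤ ‖z - x‖ := by rwa [← dist_eq_norm]
      have h6 : Real.sqrt (1-ε^2) * r ≤ r := by nlinarith [Real.sqrt_nonneg (1-ε^2)]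
      linarith
  -- the set of candidate distances
  set S : Set ℝ := {d : ℝ | ∃ ν : Pk k (n-k), ‖ν‖ = 1 ∧ ν ∈ Tᗮ ∧
    d = Metric.infDist (p + r • ν) Γ} with hSdef
  have hdelta : deltaFn k (n-k) Γ T p r = sInf S := rfl
  have hSne : S.Nonempty := ⟨_, ν0, hν0, hν0T, rfl⟩
  have hSbdd : BddBelow S := ⟨0, by rintro d ⟨ν, -, -, rfl⟩; exact infDist_nonneg⟩
  have hub : deltaFn k (n-k) Γ T p r ≤ r := by
    rw [hdelta]
    refine (csInf_le hSbdd ⟨ν0, hν0, hν0T, rfl⟩).trans ?_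
    refine (infDist_le_dist_of_mem hpΓ).trans_eq ?_
    rw [dist_eq_norm, add_sub_cancel_left, norm_smul, hν0, Real.norm_eq_abs,
      abs_of_pos hr0, mul_one]
  have hlb : Real.sqrt (1-ε^2) * r ≤ deltaFn k (n-k) Γ T p r := by
    rw [hdelta]
    refine le_csInf hSne ?_
    rintro d ⟨ν, hν, hνT, rfl⟩
    by_contra hcon
    push_neg at hcon
    obtain ⟨q, hqΓ, hqd⟩ := (infDist_lt_iff hΓne).1 hcon
    exact absurd hqd (not_lt.2 (hLB ν hν hνT q hqΓ))
  -- conclude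
  have hd0 : 0 ≤ deltaFn k (n-k) Γ T p r := by
    rw [hdelta]; exact le_csInf hSne (by rintro d ⟨ν, -, -, rfl⟩; exact infDist_nonneg)
  have hsq2 : 1 - ε ≤ Real.sqrt (1-ε^2) := by
    rw [Real.le_sqrt (by linarith) (by nlinarith)]
    nlinarith
  have hq1 : deltaFn k (n-k) Γ T p r / r ≤ 1 := by
    rw [div_le_one hr0]; exact hub
  have hq2 : 1 - ε ≤ deltaFn k (n-k) Γ T p r / r := by
    rw [le_div_iff₀ hr0]
    calc (1-ε) * r ≤ Real.sqrt (1-ε^2) * r := by nlinarith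
      _ ≤ _ := hlb
  rw [Real.dist_eq, abs_sub_lt_iff]
  constructor <;> linarith
end
end

section
/- Let 0 < k < n, identify ℝⁿ = ℝᵏ × ℝ^{n−k}, let U ⊆ ℝᵏ be open, φ : U → ℝ^{n−k} be continuously differentiable, Γ = {(z, φ(z)) : z ∈ U} its graph, and K ⊆ Γ a compact set. Then sup_{p ∈ K} |δ(p, r)/r − 1| → 0 as r → 0+, where δ(p, r) = inf_ν dist(p + rν, Γ) and the infimum is taken over all unit normals ν to Γ at p. -/
open Metric Set Filter
open scoped RealInnerProductSpace
set_option maxHeartbeats 1000000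

noncomputable section

/-! ### Auxiliary lemmas -/

lemma emb_linear (k m : ℕ) (x : Ek k × Ek m) :
    emb k m x = (WithLp.linearEquiv 2 ℝ (Ek k × Ek m)).symm x := rfl

lemma norm_fst_le_emb (k m : ℕ) (a : Ek k) (b : Ek m) : ‖a‖ ≤ ‖emb k m (a, b)‖ := by
  have h := WithLp.prod_norm_sq_eq_of_L2 (emb k m (a, b))
  have h2 : ‖a‖ ^ 2 ≤ ‖emb k m (a, b)‖ ^ 2 := by
    have ha : (emb k m (a, b)).fst = a := rfl
    rw [h, ha]; nlinarith [sq_nonneg ‖(emb k m (a, b)).snd‖]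
  have := Real.sqrt_le_sqrt h2
  rwa [Real.sqrt_sq (norm_nonneg _), Real.sqrt_sq (norm_nonneg _)] at this

lemma norm_emb_zero (k m : ℕ) (b : Ek m) : ‖emb k m (0, b)‖ = ‖b‖ := by
  have h := WithLp.prod_norm_sq_eq_of_L2 (emb k m (0, b))
  have ha : (emb k m (0, b)).fst = (0 : Ek k) := rfl
  have hb : (emb k m (0, b)).snd = b := rfl
  rw [ha, hb] at h
  simp only [norm_zero] at h
  nlinarith [norm_nonneg (emb k m (0, b)), norm_nonneg b]

/-- The tangent vector `(v, D v)` lies in the span of the `(eᵢ, D eᵢ)`. -/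
lemma tangent_mem_span (k m : ℕ) (D : Ek k →L[ℝ] Ek m) (v : Ek k) :
    emb k m (v, D v) ∈ Submodule.span ℝ (Set.range fun i : Fin k =>
      emb k m (EuclideanSpace.single i 1, D (EuclideanSpace.single i 1))) := by
  let A : Ek k →ₗ[ℝ] Pk k m :=
    (WithLp.linearEquiv 2 ℝ (Ek k × Ek m)).symm.toLinearMap ∘ₗ
      (LinearMap.prod LinearMap.id (D : Ek k →ₗ[ℝ] Ek m))
  have hA : ∀ v : Ek k, emb k m (v, D v) = A v := fun _ => rfl
  rw [hA]
  have hv : v = ∑ i, v i • EuclideanSpace.single i (1 : ℝ) := by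
    have := (EuclideanSpace.basisFun (Fin k) ℝ).sum_repr v
    simp only [EuclideanSpace.basisFun_apply, EuclideanSpace.basisFun_repr] at this
    exact this.symm
  rw [hv, map_sum]
  refine Submodule.sum_mem _ fun i _ => ?_
  rw [map_smul]
  exact Submodule.smul_mem _ _ (Submodule.subset_span ⟨i, (hA _).symm⟩)

/-- Existence of a unit normal vector. -/
lemma exists_unit_normal (k m : ℕ) (hm : 0 < m) (T : Submodule ℝ (Pk k m))
    (hfr : Module.finrank ℝ T ≤ k) : ∃ ν : Pk k m, ‖ν‖ = 1 ∧ ν ∈ Tᗮ := by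
  have hP : Module.finrank ℝ (Pk k m) = k + m := by
    rw [(WithLp.linearEquiv 2 ℝ (Ek k × Ek m)).finrank_eq]
    simp [Module.finrank_prod]
  have hTne : T ≠ ⊤ := by
    intro h
    rw [h, finrank_top, hP] at hfr
    omega
  have hbot : Tᗮ ≠ ⊥ := fun h => hTne (Submodule.orthogonal_eq_bot_iff.mp h)
  obtain ⟨v, hv, hv0⟩ := Submodule.exists_mem_ne_zero_of_ne_bot hbot
  exact ⟨(‖v‖⁻¹ : ℝ) • v, norm_smul_inv_norm hv0, Submodule.smul_mem _ _ hv⟩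

/-- Norm of an orthogonal projection is at most the norm. -/
lemma norm_orthProj_le (k m : ℕ) (S : Submodule ℝ (Pk k m)) (v : Pk k m) :
    ‖(Submodule.orthogonalProjectionOnto S v : Pk k m)‖ ≤ ‖v‖ := by
  calc ‖(Submodule.orthogonalProjectionOnto S v : Pk k m)‖ ≤ ‖Submodule.orthogonalProjectionOnto S‖ * ‖v‖ :=
        (Submodule.orthogonalProjectionOnto S).le_opNorm v
  _ ≤ 1 * ‖v‖ := mul_le_mul_of_nonneg_right (Submodule.orthogonalProjectionOnto_norm_le S) (norm_nonneg v)
  _ = ‖v‖ := one_mul _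

/-- Two projection estimates: if `t ∈ T` and `ν` is a unit vector of `Tᗮ`, then
`‖t + η - r • ν‖` is at least `r - ‖η‖` and at least `‖t‖ - ‖η‖`. -/
lemma proj_estimates (k m : ℕ) (T : Submodule ℝ (Pk k m)) (t η ν : Pk k m) (r : ℝ)
    (ht : t ∈ T) (hν : ν ∈ Tᗮ) (hr : 0 < r) (hν1 : ‖ν‖ = 1) :
    r - ‖η‖ ≤ ‖t + η - r • ν‖ ∧ ‖t‖ - ‖η‖ ≤ ‖t + η - r • ν‖ := by
  set S := Tᗮ
  set v := t + η - r • ν with hv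
  have hrν : ‖r • ν‖ = r := by rw [norm_smul, hν1]; simp [abs_of_pos hr]
  constructor
  · have h1 : ‖(Submodule.orthogonalProjectionOnto S v : Pk k m)‖ ≤ ‖v‖ := norm_orthProj_le k m S v
    have hπt : Submodule.orthogonalProjectionOnto S t = 0 :=
      Submodule.orthogonalProjectionOnto_apply_of_mem_orthogonal
        (Submodule.le_orthogonal_orthogonal T ht)
    have hπν : (Submodule.orthogonalProjectionOnto S (r • ν) : Pk k m) = r • ν :=
      (Submodule.starProjection_eq_self_iff (K := S)).mpr (Submodule.smul_mem _ _ hν)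
    have h2 : (Submodule.orthogonalProjectionOnto S v : Pk k m)
        = (Submodule.orthogonalProjectionOnto S η : Pk k m) - r • ν := by
      rw [hv, map_sub, map_add, hπt]
      push_cast
      rw [hπν]
      simp
    have h3 : r - ‖η‖ ≤ ‖(Submodule.orthogonalProjectionOnto S η : Pk k m) - r • ν‖ := by
      have htri := norm_sub_norm_le (r • ν) (Submodule.orthogonalProjectionOnto S η : Pk k m)
      have hπη : ‖(Submodule.orthogonalProjectionOnto S η : Pk k m)‖ ≤ ‖η‖ := norm_orthProj_le k m S η
      rw [norm_sub_rev] at htri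
      linarith
    linarith [h2 ▸ h3, h1]
  · have h1 : ‖(Submodule.orthogonalProjectionOnto T v : Pk k m)‖ ≤ ‖v‖ := norm_orthProj_le k m T v
    have hπν : Submodule.orthogonalProjectionOnto T (r • ν) = 0 :=
      Submodule.orthogonalProjectionOnto_apply_of_mem_orthogonal
        (Submodule.smul_mem _ _ hν)
    have hπt : (Submodule.orthogonalProjectionOnto T t : Pk k m) = t :=
      (Submodule.starProjection_eq_self_iff (K := T)).mpr ht
    have h2 : (Submodule.orthogonalProjectionOnto T v : Pk k m)
        = t + (Submodule.orthogonalProjectionOnto T η : Pk k m) := by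
      rw [hv, map_sub, map_add, hπν]
      push_cast
      rw [hπt]
      simp
    have h3 : ‖t‖ - ‖η‖ ≤ ‖t + (Submodule.orthogonalProjectionOnto T η : Pk k m)‖ := by
      have htri := norm_sub_norm_le (t + (Submodule.orthogonalProjectionOnto T η : Pk k m))
        (Submodule.orthogonalProjectionOnto T η : Pk k m)
      have hπη : ‖(Submodule.orthogonalProjectionOnto T η : Pk k m)‖ ≤ ‖η‖ := norm_orthProj_le k m T η
      have : ‖t‖ ≤ ‖t + (Submodule.orthogonalProjectionOnto T η : Pk k m)‖
          + ‖(Submodule.orthogonalProjectionOnto T η : Pk k m)‖ := by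
        calc ‖t‖ = ‖t + (Submodule.orthogonalProjectionOnto T η : Pk k m)
            - (Submodule.orthogonalProjectionOnto T η : Pk k m)‖ := by rw [add_sub_cancel_right]
        _ ≤ _ := norm_sub_le _ _
      linarith
    linarith [h2 ▸ h3, h1]

theorem statement3
    (k n : ℕ) (hk : 0 < k) (hkn : k < n)
    (U : Set (Ek k)) (hU : IsOpen U)
    (φ : Ek k → Ek (n - k)) (hφ : ContDiffOn ℝ 1 φ U)
    (Γ : Set (Pk k (n - k))) (hΓ : Γ = (fun z => emb k (n - k) (z, φ z)) '' U)
    (T : Ek k → Submodule ℝ (Pk k (n - k)))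
    (hT : ∀ z ∈ U, T z = Submodule.span ℝ (Set.range fun i : Fin k =>
      emb k (n - k) (EuclideanSpace.single i 1,
        fderivWithin ℝ φ U z (EuclideanSpace.single i 1))))
    (K : Set (Pk k (n - k))) (hK : IsCompact K) (hKΓ : K ⊆ Γ) :
    ∀ ε : ℝ, 0 < ε → ∃ r₀ : ℝ, 0 < r₀ ∧ ∀ r : ℝ, 0 < r → r < r₀ →
      ∀ z ∈ U, emb k (n - k) (z, φ z) ∈ K →
        |deltaFn k (n - k) Γ (T z) (emb k (n - k) (z, φ z)) r / r - 1| < ε := by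
  classical
  intro ε hε
  have hm : 0 < n - k := by omega
  set f := fderivWithin ℝ φ U with hfdef
  have hfc : ContinuousOn f U := hφ.continuousOn_fderivWithin hU.uniqueDiffOn le_rfl
  -- the projection of K to ℝᵏ
  set K₀ : Set (Ek k) :=
    (fun p : Pk k (n - k) => (WithLp.equiv 2 (Ek k × Ek (n - k)) p).1) '' K with hK₀def
  have hK₀c : IsCompact K₀ :=
    hK.image (continuous_fst.comp (WithLp.prod_continuous_ofLp _ _ _))
  have hK₀U : K₀ ⊆ U := by
    rintro _ ⟨p, hp, rfl⟩
    have := hKΓ hp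
    rw [hΓ] at this
    obtain ⟨w, hw, rfl⟩ := this
    simpa [emb] using hw
  obtain ⟨ρ₁, hρ₁, hLsub⟩ := hK₀c.exists_cthickening_subset_open hU hK₀U
  set L := cthickening ρ₁ K₀ with hLdef
  have hLc : IsCompact L := hK₀c.cthickening
  have hKL : K₀ ⊆ L := self_subset_cthickening _
  have huc := hLc.uniformContinuousOn_of_continuous (hfc.mono hLsub)
  rw [Metric.uniformContinuousOn_iff] at huc
  set ε' : ℝ := min (ε / 4) (1 / 2) with hε'def
  have hε'pos : 0 < ε' := lt_min (by linarith) (by norm_num)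
  have hε'le : ε' ≤ ε / 4 := min_le_left _ _
  have hε'half : ε' ≤ 1 / 2 := min_le_right _ _
  obtain ⟨δ₁, hδ₁, hucδ⟩ := huc ε' hε'pos
  set ρ := min ρ₁ δ₁ with hρdef
  have hρpos : 0 < ρ := lt_min hρ₁ hδ₁
  refine ⟨ρ / 2, by positivity, ?_⟩
  intro r hr hrρ z hzU hzK
  set p := emb k (n - k) (z, φ z) with hpdef
  have hzK₀ : z ∈ K₀ := ⟨p, hzK, rfl⟩
  have hpΓ : p ∈ Γ := by rw [hΓ]; exact ⟨z, hzU, rfl⟩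
  have hballL : ball z ρ ⊆ L := by
    refine (ball_subset_ball (min_le_left _ _)).trans ?_
    exact (ball_subset_thickening hzK₀ ρ₁).trans (thickening_subset_cthickening _ _)
  have hballU : ball z ρ ⊆ U := hballL.trans hLsub
  -- Taylor remainder estimate
  have hrem : ∀ w ∈ ball z ρ, ‖φ w - φ z - f z (w - z)‖ ≤ ε' * ‖w - z‖ := by
    intro w hw
    have hder : ∀ x ∈ ball z ρ, HasFDerivWithinAt φ (f x) (ball z ρ) x := by
      intro x hx
      have hxm : x ∈ U := hballU hx
      have hdx : DifferentiableAt ℝ φ x :=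
        (hφ.differentiableOn one_ne_zero x hxm).differentiableAt (hU.mem_nhds hxm)
      have hfx : f x = fderiv ℝ φ x := by rw [hfdef, fderivWithin_of_isOpen hU hxm]
      rw [hfx]
      exact hdx.hasFDerivAt.hasFDerivWithinAt
    have hbound : ∀ x ∈ ball z ρ, ‖f x - f z‖ ≤ ε' := by
      intro x hx
      have h3 : dist x z < δ₁ := lt_of_lt_of_le (mem_ball.mp hx) (min_le_right _ _)
      have := hucδ x (hballL hx) z (hKL hzK₀) h3
      rw [dist_eq_norm] at this
      exact this.le
    exact (convex_ball z ρ).norm_image_sub_le_of_norm_hasFDerivWithin_le' hder hbound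
      (mem_ball_self hρpos) hw
  -- unit normal exists
  have hfr : Module.finrank ℝ (T z) ≤ k := by
    rw [hT z hzU]
    refine (finrank_span_le_card (R := ℝ) _).trans ?_
    rw [Set.toFinset_range]
    exact (Finset.card_image_le).trans (by simp)
  obtain ⟨ν₀, hν₀1, hν₀⟩ := exists_unit_normal k (n - k) hm (T z) hfr
  -- the set of candidate distances
  set D : Set ℝ :=
    {d : ℝ | ∃ ν : Pk k (n - k), ‖ν‖ = 1 ∧ ν ∈ (T z)ᗮ ∧ d = Metric.infDist (p + r • ν) Γ}
    with hDdef
  have hdelta : deltaFn k (n - k) Γ (T z) p r = sInf D := rfl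
  have hDne : D.Nonempty := ⟨_, ν₀, hν₀1, hν₀, rfl⟩
  -- upper bound: every element of D is at most r
  have hup : ∀ d ∈ D, d ≤ r := by
    rintro d ⟨ν, hν1, hνT, rfl⟩
    refine (Metric.infDist_le_dist_of_mem hpΓ).trans ?_
    rw [dist_eq_norm]
    simp only [add_sub_cancel_left]
    rw [norm_smul, hν1]
    simp [abs_of_pos hr]
  -- lower bound
  have hlow : ∀ d ∈ D, (1 - 2 * ε') * r ≤ d := by
    rintro d ⟨ν, hν1, hνT, rfl⟩
    have hge : ∀ q ∈ Γ, (1 - 2 * ε') * r ≤ dist (p + r • ν) q := by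
      intro q hq
      rw [hΓ] at hq
      obtain ⟨w, hwU, rfl⟩ := hq
      set q := emb k (n - k) (w, φ w) with hqdef
      set t : Pk k (n - k) := emb k (n - k) (w - z, f z (w - z)) with htdef
      set η : Pk k (n - k) := emb k (n - k) (0, φ w - φ z - f z (w - z)) with hηdef
      have hsum : q - p = t + η := by
        rw [hqdef, hpdef, htdef, hηdef]
        simp only [emb_linear, ← map_sub, ← map_add]
        congr 1
        apply Prod.ext
        · simp
        · simp only [Prod.mk_sub_mk, Prod.mk_add_mk, Prod.snd]
          abel
      have hdistq : dist (p + r • ν) q = ‖t + η - r • ν‖ := by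
        rw [dist_eq_norm]
        rw [show p + r • ν - q = -(t + η - r • ν) by rw [← hsum]; abel]
        rw [norm_neg]
      have hηnorm : ‖η‖ = ‖φ w - φ z - f z (w - z)‖ := norm_emb_zero _ _ _
      have htT : t ∈ T z := by
        rw [hT z hzU]
        exact tangent_mem_span k (n - k) (f z) (w - z)
      have htnorm : ‖w - z‖ ≤ ‖t‖ := norm_fst_le_emb _ _ _ _
      have hpq : ‖w - z‖ ≤ dist q p := by
        rw [dist_eq_norm, hsum, ← hsum, hqdef, hpdef]
        simp only [emb_linear, ← map_sub]
        exact norm_fst_le_emb _ _ _ _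
      obtain ⟨hproj1, hproj2⟩ :=
        proj_estimates k (n - k) (T z) t η ν r htT hνT hr hν1
      rw [hdistq]
      by_cases hcase : ‖w - z‖ < ρ
      · have hη : ‖η‖ ≤ ε' * ‖w - z‖ := by
          rw [hηnorm]
          exact hrem w (by rwa [mem_ball, dist_eq_norm])
        by_cases hcase2 : ‖w - z‖ ≤ 2 * r
        · have : ‖η‖ ≤ ε' * (2 * r) :=
            hη.trans (mul_le_mul_of_nonneg_left hcase2 hε'pos.le)
          linarith
        · push_neg at hcase2
          have h1 : (1 - ε') * (2 * r) ≤ (1 - ε') * ‖w - z‖ :=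
            mul_le_mul_of_nonneg_left hcase2.le (by linarith)
          nlinarith
      · push_neg at hcase
        have htri : dist p q ≤ dist p (p + r • ν) + dist (p + r • ν) q := dist_triangle _ _ _
        have hd1 : dist p (p + r • ν) = r := by
          rw [dist_eq_norm]
          simp only [sub_add_cancel_left, norm_neg]
          rw [norm_smul, hν1]
          simp [abs_of_pos hr]
        have hd2 : ρ ≤ dist p q := by rw [dist_comm]; linarith [hpq]
        rw [← hdistq]
        nlinarith [hε'pos.le]
    refine le_of_not_gt fun hcon => ?_
    rw [Metric.infDist_lt_iff ⟨p, hpΓ⟩] at hcon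
    obtain ⟨q, hqΓ, hqlt⟩ := hcon
    exact absurd (hge q hqΓ) (by linarith)
  -- conclude
  have hbdd : BddBelow D := ⟨(1 - 2 * ε') * r, fun d hd => hlow d hd⟩
  have hd₀ : Metric.infDist (p + r • ν₀) Γ ∈ D := ⟨ν₀, hν₀1, hν₀, rfl⟩
  have hδle : sInf D ≤ r := (csInf_le hbdd hd₀).trans (hup _ hd₀)
  have hδlow : (1 - 2 * ε') * r ≤ sInf D := le_csInf hDne hlow
  rw [hdelta, abs_lt]
  have h1 : sInf D / r ≤ 1 := (div_le_one hr).mpr hδle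
  have h2 : 1 - 2 * ε' ≤ sInf D / r := (le_div_iff₀ hr).mpr (by linarith)
  constructor
  · linarith
  · linarith
end
end

section
/- Fix an integer m ≥ 2, a real λ > (m−1)²/4, β = √(λ − (m−1)²/4), ψ(t) = sinh(t)^{−(m−1)/2} e^{iβt}, and for R > 0 let F_R(t) = ψ(t) sin²((2π/R)(t − R/2)) for t > 0. Then for every R₀ > 0 there exists a constant C > 0, depending only on m, λ and R₀, such that for all R > R₀: ∫_{R/2}^{R} |F_R'(t)|² sinh^{m−1}(t) dt ≤ C ∫_{R/2}^{R} |F_R(t)|² sinh^{m−1}(t) dt. -/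
open Filter Set
open scoped Real

noncomputable section

set_option maxHeartbeats 1000000

lemma aux_sin_pow4 : ∫ x in (0:ℝ)..π, Real.sin x ^ 4 = 3 * π / 8 := by
  have h := integral_sin_pow (a := 0) (b := π) 2
  have h2 := integral_sin_sq (a := (0:ℝ)) (b := π)
  norm_num [Real.sin_pi, Real.cos_pi] at h h2
  rw [h]; ring

lemma aux_int (R : ℝ) (hR : 0 < R) (n : ℕ) :
    ∫ t in (R/2)..R, Real.sin (2*π/R*(t-R/2)) ^ n
      = (2*π/R)⁻¹ * ∫ x in (0:ℝ)..π, Real.sin x ^ n := by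
  have hπ := Real.pi_pos
  have ha : (2*π/R) ≠ 0 := by positivity
  have h1 : ∫ t in (R/2)..R, Real.sin (2*π/R*(t-R/2)) ^ n
      = ∫ s in (R/2 - R/2)..(R - R/2), Real.sin (2*π/R*s) ^ n :=
    intervalIntegral.integral_comp_sub_right (fun s => Real.sin (2*π/R*s) ^ n) (R/2)
  rw [h1]
  have h2 : ∫ s in (R/2 - R/2)..(R - R/2), Real.sin (2*π/R*s) ^ n
      = (2*π/R)⁻¹ • ∫ x in (2*π/R*(R/2 - R/2))..(2*π/R*(R - R/2)), Real.sin x ^ n :=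
    intervalIntegral.integral_comp_mul_left (fun x => Real.sin x ^ n) ha
  rw [h2]
  have e1 : 2*π/R*(R/2 - R/2) = 0 := by ring
  have e2 : 2*π/R*(R - R/2) = π := by field_simp; ring
  rw [e1, e2, smul_eq_mul]

lemma aux_sin4 (R : ℝ) (hR : 0 < R) :
    ∫ t in (R/2)..R, Real.sin (2*π/R*(t-R/2)) ^ 4 = 3 * R / 16 := by
  have hπ := Real.pi_pos
  rw [aux_int R hR 4, aux_sin_pow4]
  field_simp; ring

lemma aux_sin2 (R : ℝ) (hR : 0 < R) :
    ∫ t in (R/2)..R, Real.sin (2*π/R*(t-R/2)) ^ 2 = R / 4 := by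
  have hπ := Real.pi_pos
  rw [aux_int R hR 2, integral_sin_sq]
  norm_num [Real.sin_pi]
  field_simp; ring

lemma aux_deriv (β ρ a c : ℝ) (F : ℝ → ℂ)
    (hF : ∀ t : ℝ, F t = ((Real.sinh t ^ ρ : ℝ) : ℂ) * Complex.exp (Complex.I * β * t)
        * ((Real.sin (a * (t - c)) ^ 2 : ℝ) : ℂ))
    (t : ℝ) (ht : 0 < t) :
    HasDerivAt F
      (((Real.sinh t ^ ρ : ℝ) : ℂ) * Complex.exp (Complex.I * β * t) *
        (((ρ * (Real.cosh t / Real.sinh t) * Real.sin (a * (t - c)) ^ 2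
            + 2 * Real.sin (a * (t - c)) * Real.cos (a * (t - c)) * a : ℝ) : ℂ)
          + ((β * Real.sin (a * (t - c)) ^ 2 : ℝ) : ℂ) * Complex.I)) t := by
  have hs : 0 < Real.sinh t := Real.sinh_pos_iff.2 ht
  have hu : HasDerivAt (fun t => Real.sinh t ^ ρ)
      (Real.cosh t * ρ * Real.sinh t ^ (ρ - 1)) t :=
    (Real.hasDerivAt_sinh t).rpow_const (Or.inl hs.ne')
  have hinner : HasDerivAt (fun s : ℝ => Complex.I * β * s) (Complex.I * β) t := by
    simpa using (Complex.ofRealCLM.hasDerivAt (x := t)).const_mul (Complex.I * β)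
  have he : HasDerivAt (fun s : ℝ => Complex.exp (Complex.I * β * s))
      (Complex.exp (Complex.I * β * t) * (Complex.I * β)) t := hinner.cexp
  have hθ : HasDerivAt (fun s : ℝ => a * (s - c)) a t := by
    simpa using ((hasDerivAt_id t).sub_const c).const_mul a
  have hg : HasDerivAt (fun s : ℝ => Real.sin (a * (s - c)) ^ 2)
      (2 * Real.sin (a * (t - c)) ^ 1 * (Real.cos (a * (t - c)) * a)) t := by
    simpa using (hθ.sin.fun_pow 2)
  have hall := ((hu.ofReal_comp.mul he).mul hg.ofReal_comp)
  have hFe : F = fun s => ((Real.sinh s ^ ρ : ℝ) : ℂ) * Complex.exp (Complex.I * β * s)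
        * ((Real.sin (a * (s - c)) ^ 2 : ℝ) : ℂ) := funext hF
  rw [hFe]
  refine hall.congr_deriv ?_
  simp only [Pi.mul_apply]
  have h1 : Real.sinh t ^ (ρ - 1) = Real.sinh t ^ ρ / Real.sinh t := by
    rw [Real.rpow_sub hs, Real.rpow_one]
  rw [h1]
  push_cast
  have : (Real.sinh t : ℂ) ≠ 0 := by exact_mod_cast hs.ne'
  field_simp
  ring


/-- for an integer `m ≥ 2`, a real `λ > (m−1)²/4`, `β = √(λ − (m−1)²/4)`,
`ψ(t) = sinh(t)^{−(m−1)/2} e^{iβt}` and `F_R(t) = ψ(t) sin²((2π/R)(t − R/2))`: for every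
`R₀ > 0` there is `C > 0` (depending only on `m`, `λ`, `R₀`) such that for all `R > R₀`,
`∫_{R/2}^R |F_R'|² sinh^{m−1} ≤ C ∫_{R/2}^R |F_R|² sinh^{m−1}`. -/
theorem statement12
    (m : ℕ) (hm : 2 ≤ m) (lam : ℝ) (hlam : ((m : ℝ) - 1) ^ 2 / 4 < lam)
    (β : ℝ) (hβ : β = Real.sqrt (lam - ((m : ℝ) - 1) ^ 2 / 4))
    (ψ : ℝ → ℂ)
    (hψ : ∀ t : ℝ, ψ t =
      ((Real.sinh t ^ (-(((m : ℝ) - 1) / 2)) : ℝ) : ℂ) * Complex.exp (Complex.I * β * t))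
    (F : ℝ → ℝ → ℂ)
    (hF : ∀ R t : ℝ, F R t = ψ t * ((Real.sin (2 * π / R * (t - R / 2)) ^ 2 : ℝ) : ℂ)) :
    ∀ R₀ : ℝ, 0 < R₀ → ∃ C : ℝ, 0 < C ∧ ∀ R : ℝ, R₀ < R →
      (∫ t in (R / 2)..R, ‖deriv (F R) t‖ ^ 2 * Real.sinh t ^ (m - 1))
        ≤ C * ∫ t in (R / 2)..R, ‖F R t‖ ^ 2 * Real.sinh t ^ (m - 1) := by
  intro R₀ hR₀
  have hπ := Real.pi_pos
  set ρ : ℝ := -(((m : ℝ) - 1) / 2) with hρ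
  set K : ℝ := Real.cosh (R₀/2) / Real.sinh (R₀/2) with hKdef
  set c1 : ℝ := 2*ρ^2*K^2 + β^2 with hc1
  refine ⟨c1 + 128*π^2/(3*R₀^2) + 1, by positivity, ?_⟩
  intro R hR
  have hR0 : (0:ℝ) < R := hR₀.trans hR
  have hle : R/2 ≤ R := by linarith
  -- positivity of sinh on the interval
  have hpos : ∀ t ∈ Icc (R/2) R, 0 < t := fun t ht => lt_of_lt_of_le (by linarith) ht.1
  have hsp : ∀ t ∈ Icc (R/2) R, 0 < Real.sinh t :=
    fun t ht => Real.sinh_pos_iff.2 (hpos t ht)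
  -- the key power identity
  have hone : ∀ t ∈ Icc (R/2) R,
      (Real.sinh t ^ ρ) ^ 2 * Real.sinh t ^ (m - 1) = 1 := by
    intro t ht
    have hs := hsp t ht
    have e1 : (Real.sinh t ^ ρ) ^ 2 = Real.sinh t ^ (ρ * 2) := by
      rw [Real.rpow_mul hs.le, Real.rpow_two]
    have e2 : Real.sinh t ^ (m - 1 : ℕ) = Real.sinh t ^ (((m:ℝ) - 1)) := by
      rw [← Real.rpow_natCast]
      congr 1
      have : ((m - 1 : ℕ) : ℝ) = (m : ℝ) - 1 := by
        rw [Nat.cast_sub (by omega)]; norm_num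
      rw [this]
    rw [e1, e2, ← Real.rpow_add hs]
    have : ρ * 2 + ((m:ℝ) - 1) = 0 := by rw [hρ]; ring
    rw [this, Real.rpow_zero]
  -- F in the aux_deriv form
  have hFe : ∀ t : ℝ, F R t = ((Real.sinh t ^ ρ : ℝ) : ℂ) * Complex.exp (Complex.I * β * t)
      * ((Real.sin ((2*π/R) * (t - R/2)) ^ 2 : ℝ) : ℂ) := by
    intro t; rw [hF, hψ]
  -- abbreviations
  set a : ℝ := 2*π/R with ha
  have hXeq : ∀ t ∈ Icc (R/2) R,
      ‖deriv (F R) t‖ ^ 2 * Real.sinh t ^ (m - 1)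
        = (ρ * (Real.cosh t / Real.sinh t) * Real.sin (a * (t - R/2)) ^ 2
            + 2 * Real.sin (a * (t - R/2)) * Real.cos (a * (t - R/2)) * a) ^ 2
          + (β * Real.sin (a * (t - R/2)) ^ 2) ^ 2 := by
    intro t ht
    have hd := (aux_deriv β ρ a (R/2) (F R) hFe t (hpos t ht)).deriv
    rw [hd]
    have hs := hsp t ht
    have hu : 0 < Real.sinh t ^ ρ := Real.rpow_pos_of_pos hs ρ
    rw [norm_mul, norm_mul]
    have h1 : ‖((Real.sinh t ^ ρ : ℝ) : ℂ)‖ = Real.sinh t ^ ρ := by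
      rw [Complex.norm_real, Real.norm_eq_abs, abs_of_pos hu]
    have h2 : ‖Complex.exp (Complex.I * β * t)‖ = 1 := by
      rw [Complex.norm_exp]
      have : (Complex.I * β * t).re = 0 := by simp
      rw [this, Real.exp_zero]
    rw [h1, h2, mul_one, mul_pow]
    have h3 : ‖
        (((ρ * (Real.cosh t / Real.sinh t) * Real.sin (a * (t - R/2)) ^ 2
            + 2 * Real.sin (a * (t - R/2)) * Real.cos (a * (t - R/2)) * a : ℝ) : ℂ)
          + ((β * Real.sin (a * (t - R/2)) ^ 2 : ℝ) : ℂ) * Complex.I)‖ ^ 2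
        = (ρ * (Real.cosh t / Real.sinh t) * Real.sin (a * (t - R/2)) ^ 2
            + 2 * Real.sin (a * (t - R/2)) * Real.cos (a * (t - R/2)) * a) ^ 2
          + (β * Real.sin (a * (t - R/2)) ^ 2) ^ 2 := by
      rw [Complex.sq_norm, Complex.normSq_add_mul_I]
    rw [h3, mul_assoc, mul_comm (_ + _) (Real.sinh t ^ (m-1)), ← mul_assoc,
      hone t ht, one_mul]
  have hYeq : ∀ t ∈ Icc (R/2) R,
      ‖F R t‖ ^ 2 * Real.sinh t ^ (m - 1)
        = Real.sin (a * (t - R/2)) ^ 4 := by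
    intro t ht
    have hs := hsp t ht
    have hu : 0 < Real.sinh t ^ ρ := Real.rpow_pos_of_pos hs ρ
    rw [hFe, norm_mul, norm_mul, Complex.norm_real, Complex.norm_real, Real.norm_eq_abs,
      Real.norm_eq_abs, abs_of_pos hu, Complex.norm_exp]
    have : (Complex.I * β * t).re = 0 := by simp
    rw [this, Real.exp_zero, mul_one, abs_of_nonneg (sq_nonneg _), mul_pow]
    have : (Real.sin (a * (t - R/2)) ^ 2) ^ 2 = Real.sin (a * (t - R/2)) ^ 4 := by ring
    rw [this, mul_assoc, mul_comm (Real.sin _ ^ 4), ← mul_assoc, hone t ht, one_mul]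
  -- rewrite both integrals
  have hIcc : uIcc (R/2) R = Icc (R/2) R := uIcc_of_le hle
  have hRHS : (∫ t in (R / 2)..R, ‖F R t‖ ^ 2 * Real.sinh t ^ (m - 1))
      = 3 * R / 16 := by
    rw [intervalIntegral.integral_congr (g := fun t => Real.sin (a * (t - R/2)) ^ 4)
      (by rw [hIcc]; exact hYeq)]
    rw [ha]
    exact aux_sin4 R hR0
  have hLHS : (∫ t in (R / 2)..R, ‖deriv (F R) t‖ ^ 2 * Real.sinh t ^ (m - 1))
      = ∫ t in (R / 2)..R,
        ((ρ * (Real.cosh t / Real.sinh t) * Real.sin (a * (t - R/2)) ^ 2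
            + 2 * Real.sin (a * (t - R/2)) * Real.cos (a * (t - R/2)) * a) ^ 2
          + (β * Real.sin (a * (t - R/2)) ^ 2) ^ 2) :=
    intervalIntegral.integral_congr (by rw [hIcc]; exact hXeq)
  rw [hLHS, hRHS]
  -- continuity facts
  have hcs : Continuous (fun t : ℝ => Real.sin (a * (t - R/2))) := by fun_prop
  have hcc : Continuous (fun t : ℝ => Real.cos (a * (t - R/2))) := by fun_prop
  have hq : ContinuousOn (fun t : ℝ => Real.cosh t / Real.sinh t) (uIcc (R/2) R) := by
    rw [hIcc]
    exact ContinuousOn.div Real.continuous_cosh.continuousOn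
      Real.continuous_sinh.continuousOn (fun t ht => (hsp t ht).ne')
  have hXcont : ContinuousOn (fun t =>
      (ρ * (Real.cosh t / Real.sinh t) * Real.sin (a * (t - R/2)) ^ 2
            + 2 * Real.sin (a * (t - R/2)) * Real.cos (a * (t - R/2)) * a) ^ 2
          + (β * Real.sin (a * (t - R/2)) ^ 2) ^ 2) (uIcc (R/2) R) := by
    apply ContinuousOn.add
    · apply ContinuousOn.pow
      apply ContinuousOn.add
      · exact (continuousOn_const.mul hq).mul ((hcs.pow 2).continuousOn)
      · exact ((continuousOn_const.mul hcs.continuousOn).mul hcc.continuousOn).mul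
          continuousOn_const
    · exact (continuousOn_const.mul (hcs.pow 2).continuousOn).pow 2
  have hHcont : Continuous (fun t =>
      c1 * Real.sin (a * (t - R/2)) ^ 4 + 8 * a ^ 2 * Real.sin (a * (t - R/2)) ^ 2) := by fun_prop
  -- pointwise bound
  have hpt : ∀ t ∈ Icc (R/2) R,
      (ρ * (Real.cosh t / Real.sinh t) * Real.sin (a * (t - R/2)) ^ 2
            + 2 * Real.sin (a * (t - R/2)) * Real.cos (a * (t - R/2)) * a) ^ 2
          + (β * Real.sin (a * (t - R/2)) ^ 2) ^ 2
        ≤ c1 * Real.sin (a * (t - R/2)) ^ 4 + 8 * a ^ 2 * Real.sin (a * (t - R/2)) ^ 2 := by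
    intro t ht
    have hs := hsp t ht
    have hK0 : 0 < K := by
      rw [hKdef]
      exact div_pos (Real.cosh_pos _) (Real.sinh_pos_iff.2 (by linarith))
    have hctK : Real.cosh t / Real.sinh t ≤ K := by
      rw [hKdef, div_le_div_iff₀ hs (Real.sinh_pos_iff.2 (by linarith))]
      have h := Real.sinh_sub t (R₀/2)
      have hnn : 0 ≤ Real.sinh (t - R₀/2) := by
        have h1 : R/2 ≤ t := ht.1
        exact (Real.sinh_pos_iff.2 (by linarith)).le
      nlinarith [h]
    have hct0 : 0 < Real.cosh t / Real.sinh t := div_pos (Real.cosh_pos _) hs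
    set S := Real.sin (a * (t - R/2)) with hS
    set Co := Real.cos (a * (t - R/2)) with hCo
    have hS1 : S ^ 2 ≤ 1 := by nlinarith [Real.sin_sq_add_cos_sq (a * (t - R/2)), sq_nonneg Co]
    have hCo1 : Co ^ 2 ≤ 1 := by nlinarith [Real.sin_sq_add_cos_sq (a * (t - R/2)), sq_nonneg S]
    have h1 : (ρ * (Real.cosh t / Real.sinh t) * S ^ 2) ^ 2 ≤ ρ^2 * K^2 * S ^ 4 := by
      have hq2 : (Real.cosh t / Real.sinh t)^2 ≤ K^2 := by nlinarith
      have h := mul_le_mul_of_nonneg_left hq2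
        (by positivity : (0:ℝ) ≤ ρ^2 * S^4)
      nlinarith [h]
    have h2 : (2 * S * Co * a) ^ 2 ≤ 4 * a^2 * S^2 := by nlinarith [sq_nonneg (S*a)]
    have h3 : (β * S ^ 2) ^ 2 ≤ β^2 * S^4 := by nlinarith
    rw [hc1]
    nlinarith [sq_nonneg (ρ * (Real.cosh t / Real.sinh t) * S ^ 2 - 2 * S * Co * a)]
  -- integrability
  have hXint := hXcont.intervalIntegrable (μ := MeasureTheory.volume)
  have hHint := hHcont.intervalIntegrable (μ := MeasureTheory.volume) (R/2) R
  have hmono := intervalIntegral.integral_mono_on hle hXint hHint hpt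
  have hHval : (∫ t in (R / 2)..R,
      (c1 * Real.sin (a * (t - R/2)) ^ 4 + 8 * a ^ 2 * Real.sin (a * (t - R/2)) ^ 2))
      = c1 * (3 * R / 16) + 8 * a ^ 2 * (R / 4) := by
    rw [intervalIntegral.integral_add
      ((continuous_const.fun_mul (hcs.fun_pow 4)).intervalIntegrable _ _)
      ((continuous_const.fun_mul (hcs.fun_pow 2)).intervalIntegrable _ _),
      intervalIntegral.integral_const_mul, intervalIntegral.integral_const_mul]
    rw [ha]
    rw [aux_sin4 R hR0, aux_sin2 R hR0]
  rw [hHval] at hmono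
  refine le_trans hmono ?_
  -- final arithmetic
  have he : 8 * a ^ 2 * (R / 4) = 8 * π^2 / R := by
    rw [ha]; field_simp; ring
  rw [he]
  have h1 : 8*π^2/R ≤ 8*π^2*R/R₀^2 := by
    rw [div_le_div_iff₀ hR0 (by positivity)]
    nlinarith [sq_nonneg π, mul_pos hπ hπ, mul_nonneg (mul_nonneg (by positivity : (0:ℝ) ≤ 8*π^2) (by linarith : (0:ℝ) ≤ R - R₀)) (by linarith : (0:ℝ) ≤ R + R₀)]
  have h2 : (c1 + 128*π^2/(3*R₀^2) + 1) * (3 * R / 16)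
      = c1 * (3 * R / 16) + 8*π^2*R/R₀^2 + 3 * R / 16 := by
    field_simp
    ring
  rw [h2]
  linarith
end
end
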